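/- (Uncertainty principle for non-harmonic Fourier series) Let S > 1 and let μ = Σ_{j=1}^S x_j δ_{ω_j} be a non-zero discrete complex measure on 𝕋 with at most S atoms. Then |μ̂(0)|² ≤ (1 - 4^{-S}) Σ_{k=0}^{S} |μ̂(k)|². -/

import Mathlib

open Polynomial Finset Complex

lemma mprod_norm_one (t : Multiset ℂ) (h : ∀ w ∈ t, ‖w‖ = 1) : ‖t.prod‖ = 1 := by
  induction t using Multiset.induction with
  | empty => simp
  | cons a s ih =>
    rw [Multiset.prod_cons, norm_mul, h a (Multiset.mem_cons_self a s),
      ih (fun w hw => h w (Multiset.mem_cons_of_mem hw)), one_mul]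

lemma esymm_norm_le (m : Multiset ℂ) (h : ∀ w ∈ m, ‖w‖ = 1) (n : ℕ) :
    ‖m.esymm n‖ ≤ ((Multiset.card m).choose n : ℝ) := by
  rw [Multiset.esymm]
  refine le_trans (norm_multiset_sum_le _) ?_
  rw [Multiset.map_map]
  have h1 : ∀ r ∈ (Multiset.powersetCard n m).map (fun t => ‖Multiset.prod t‖), r = 1 := by
    intro r hr
    obtain ⟨t, ht, rfl⟩ := Multiset.mem_map.mp hr
    obtain ⟨hle, -⟩ := Multiset.mem_powersetCard.mp ht
    exact mprod_norm_one t (fun w hw => h w (Multiset.mem_of_le hle hw))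
  have h2 := Multiset.eq_replicate_of_mem h1
  rw [Function.comp_def, h2, Multiset.sum_replicate, Multiset.card_map,
    Multiset.card_powersetCard]
  simp

theorem uncertainty_principle_complex
    (S : ℕ) (hS : 1 < S)
    (x : Fin S → ℂ) (hx : x ≠ 0)
    (ω : Fin S → ℝ) (hω : ∀ j, ω j ∈ Set.Ico (0 : ℝ) 1)
    (hinj : Function.Injective ω)
    (μhat : ℕ → ℂ)
    (hμhat : ∀ k : ℕ, μhat k =
      ∑ j, x j * Complex.exp (-(2 * Real.pi * Complex.I) * k * (ω j))) :
    ‖μhat 0‖ ^ 2 ≤ (1 - ((4 : ℝ) ^ S)⁻¹) * ∑ k ∈ Finset.range (S + 1), ‖μhat k‖ ^ 2 := by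
  classical
  set z : Fin S → ℂ := fun j => Complex.exp (-(2 * Real.pi * Complex.I) * ω j) with hzdef
  have hznorm : ∀ j, ‖z j‖ = 1 := by
    intro j
    rw [hzdef]
    rw [Complex.norm_exp]
    have : (-(2 * ↑Real.pi * Complex.I) * (ω j : ℂ)).re = 0 := by
      simp [Complex.mul_re, Complex.mul_im]
    rw [this, Real.exp_zero]
  have hμz : ∀ k : ℕ, μhat k = ∑ j, x j * z j ^ k := by
    intro k
    rw [hμhat k]
    refine Finset.sum_congr rfl fun j _ => ?_
    congr 1
    rw [hzdef]
    rw [← Complex.exp_nat_mul]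
    congr 1
    ring
  set P : Polynomial ℂ := ∏ j, (X - C (z j)) with hPdef
  have hdeg : P.natDegree = S := by
    rw [hPdef, Polynomial.natDegree_prod _ _ (fun j _ => Polynomial.X_sub_C_ne_zero (z j))]
    simp
  set c : ℕ → ℂ := fun k => P.coeff k with hcdef
  set m : Multiset ℂ := Multiset.map z Finset.univ.val with hmdef
  have hmcard : Multiset.card m = S := by
    rw [hmdef, Multiset.card_map]; simp
  have hmnorm : ∀ w ∈ m, ‖w‖ = 1 := by
    intro w hw
    obtain ⟨j, -, rfl⟩ := Multiset.mem_map.mp hw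
    exact hznorm j
  have hPm : P = (m.map fun t => X - C t).prod := by
    rw [hPdef, hmdef, Multiset.map_map, Finset.prod_eq_multiset_prod]
    rfl
  -- coefficient bound
  have hcb : ∀ k ≤ S, ‖c k‖ ≤ (S.choose k : ℝ) := by
    intro k hk
    have hk' : k ≤ Multiset.card m := by rw [hmcard]; exact hk
    show ‖P.coeff k‖ ≤ _
    rw [hPm, Multiset.prod_X_sub_C_coeff m hk', norm_mul, norm_pow, norm_neg, norm_one,
      one_pow, one_mul, hmcard]
    calc ‖m.esymm (S - k)‖ ≤ ((Multiset.card m).choose (S - k) : ℝ) := esymm_norm_le m hmnorm _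
      _ = (S.choose k : ℝ) := by rw [hmcard, Nat.choose_symm hk]
  -- the key linear relation
  have hzero : ∑ k ∈ Finset.range (S + 1), c k * μhat k = 0 := by
    have hPz : ∀ j, ∑ k ∈ Finset.range (S + 1), c k * z j ^ k = 0 := by
      intro j
      have he : P.eval (z j) = ∑ k ∈ Finset.range (S + 1), c k * z j ^ k := by
        conv_lhs => rw [Polynomial.eval_eq_sum_range, hdeg]
      rw [← he, hPdef, Polynomial.eval_prod]
      exact Finset.prod_eq_zero (Finset.mem_univ j) (by simp)
    calc ∑ k ∈ Finset.range (S + 1), c k * μhat k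
        = ∑ k ∈ Finset.range (S + 1), ∑ j, c k * (x j * z j ^ k) := by
          refine Finset.sum_congr rfl fun k _ => ?_
          rw [hμz k, Finset.mul_sum]
      _ = ∑ j, x j * ∑ k ∈ Finset.range (S + 1), c k * z j ^ k := by
          rw [Finset.sum_comm]
          refine Finset.sum_congr rfl fun j _ => ?_
          rw [Finset.mul_sum]
          refine Finset.sum_congr rfl fun k _ => ?_
          ring
      _ = 0 := by simp [hPz]
  -- |c 0| = 1
  have hc0 : ‖c 0‖ = 1 := by
    have he : c 0 = (m.map fun t => -t).prod := by
      show P.coeff 0 = _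
      rw [Polynomial.coeff_zero_eq_eval_zero, hPm, Polynomial.eval_multiset_prod,
        Multiset.map_map]
      congr 1
      refine Multiset.map_congr rfl fun t _ => ?_
      simp
    rw [he]
    apply mprod_norm_one
    intro w hw
    obtain ⟨t, ht, rfl⟩ := Multiset.mem_map.mp hw
    rw [norm_neg]
    exact hmnorm t ht
  set A : ℝ := ∑ k ∈ Finset.range (S + 1), ‖c k‖ ^ 2 with hAdef
  have hA1 : (1 : ℝ) ≤ A := by
    rw [hAdef]
    calc (1:ℝ) = ‖c 0‖ ^ 2 := by rw [hc0]; norm_num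
      _ ≤ _ := Finset.single_le_sum (f := fun k => ‖c k‖ ^ 2)
          (fun k _ => by positivity) (by simp)
  have hA0 : (0 : ℝ) < A := lt_of_lt_of_le one_pos hA1
  have hA4 : A ≤ (4 : ℝ) ^ S := by
    have hT : ∑ k ∈ Finset.range (S + 1), ‖c k‖ ≤ (2 : ℝ) ^ S := by
      calc ∑ k ∈ Finset.range (S + 1), ‖c k‖
          ≤ ∑ k ∈ Finset.range (S + 1), (S.choose k : ℝ) :=
            Finset.sum_le_sum fun k hk => hcb k (Nat.lt_succ_iff.mp (Finset.mem_range.mp hk))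
        _ = (2 : ℝ) ^ S := by
            rw [← Nat.cast_sum, Nat.sum_range_choose]
            push_cast; ring
    have hTnn : (0:ℝ) ≤ ∑ k ∈ Finset.range (S + 1), ‖c k‖ :=
      Finset.sum_nonneg fun k _ => norm_nonneg _
    calc A ≤ (∑ k ∈ Finset.range (S + 1), ‖c k‖) ^ 2 := by
          rw [sq, Finset.sum_mul]
          refine Finset.sum_le_sum fun k hk => ?_
          rw [sq]
          exact mul_le_mul_of_nonneg_left
            (Finset.single_le_sum (fun i _ => norm_nonneg (c i)) hk) (norm_nonneg _)
      _ ≤ ((2:ℝ) ^ S) ^ 2 := pow_le_pow_left₀ hTnn hT 2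
      _ = (4:ℝ) ^ S := by rw [← pow_mul, mul_comm, pow_mul]; norm_num
  -- the dual vector
  set a : ℕ → ℂ := fun k =>
    (if k = 0 then 1 else 0) - (A⁻¹ : ℝ) * (starRingEnd ℂ) (c 0) * c k with hadef
  have hv0 : μhat 0 = ∑ k ∈ Finset.range (S + 1), a k * μhat k := by
    rw [hadef]
    simp only [sub_mul, ite_mul, one_mul, zero_mul, Finset.sum_sub_distrib, mul_assoc]
    rw [← Finset.mul_sum, ← Finset.mul_sum, hzero, mul_zero, mul_zero, sub_zero,
      Finset.sum_ite_eq']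
    simp
  have hconjc : (starRingEnd ℂ) (c 0) * c 0 = 1 := by
    rw [mul_comm, Complex.mul_conj]
    rw [Complex.normSq_eq_norm_sq, hc0]
    norm_num
  have hAinv1 : A⁻¹ ≤ 1 := by
    rw [inv_le_one_iff₀]; right; exact hA1
  have hAinv0 : (0:ℝ) ≤ A⁻¹ := inv_nonneg.mpr hA0.le
  -- compute the norm of a
  have hsum_a : ∑ k ∈ Finset.range (S + 1), ‖a k‖ ^ 2 = 1 - A⁻¹ := by
    have h0mem : (0:ℕ) ∈ Finset.range (S + 1) := by simp
    rw [← Finset.add_sum_erase _ _ h0mem]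
    have ha0 : ‖a 0‖ ^ 2 = (1 - A⁻¹) ^ 2 := by
      have : a 0 = ((1 - A⁻¹ : ℝ) : ℂ) := by
        rw [hadef]
        simp only [if_pos rfl, mul_assoc, hconjc, mul_one]
        push_cast
        ring
      rw [this, Complex.norm_real, Real.norm_eq_abs, _root_.abs_of_nonneg (by linarith)]
    have hrest : ∑ k ∈ (Finset.range (S + 1)).erase 0, ‖a k‖ ^ 2
        = A⁻¹ ^ 2 * ∑ k ∈ (Finset.range (S + 1)).erase 0, ‖c k‖ ^ 2 := by
      rw [Finset.mul_sum]
      refine Finset.sum_congr rfl fun k hk => ?_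
      have hk0 : k ≠ 0 := Finset.ne_of_mem_erase hk
      have : a k = -(((A⁻¹ : ℝ) : ℂ) * ((starRingEnd ℂ) (c 0) * c k)) := by
        rw [hadef]; simp [hk0]; ring
      rw [this, norm_neg, norm_mul, norm_mul, RCLike.norm_conj, hc0, one_mul,
        Complex.norm_real, Real.norm_eq_abs, _root_.abs_of_nonneg hAinv0, mul_pow]
    have herase : ∑ k ∈ (Finset.range (S + 1)).erase 0, ‖c k‖ ^ 2 = A - 1 := by
      have := Finset.add_sum_erase _ (fun k => ‖c k‖ ^ 2) h0mem
      rw [hc0] at this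
      rw [← hAdef] at this
      linarith [this]
    rw [ha0, hrest, herase]
    field_simp
    ring
  -- Cauchy-Schwarz
  have hCS : ‖μhat 0‖ ^ 2 ≤ (1 - A⁻¹) * ∑ k ∈ Finset.range (S + 1), ‖μhat k‖ ^ 2 := by
    have h1 : ‖μhat 0‖ ≤ ∑ k ∈ Finset.range (S + 1), ‖a k‖ * ‖μhat k‖ := by
      rw [hv0]
      refine le_trans (norm_sum_le _ _) (le_of_eq ?_)
      exact Finset.sum_congr rfl fun k _ => norm_mul _ _
    calc ‖μhat 0‖ ^ 2 ≤ (∑ k ∈ Finset.range (S + 1), ‖a k‖ * ‖μhat k‖) ^ 2 :=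
          pow_le_pow_left₀ (norm_nonneg _) h1 2
      _ ≤ (∑ k ∈ Finset.range (S + 1), ‖a k‖ ^ 2)
            * ∑ k ∈ Finset.range (S + 1), ‖μhat k‖ ^ 2 :=
          Finset.sum_mul_sq_le_sq_mul_sq _ _ _
      _ = (1 - A⁻¹) * ∑ k ∈ Finset.range (S + 1), ‖μhat k‖ ^ 2 := by rw [hsum_a]
  refine le_trans hCS (mul_le_mul_of_nonneg_right ?_
    (Finset.sum_nonneg fun k _ => sq_nonneg _))
  have h4 : ((4:ℝ) ^ S)⁻¹ ≤ A⁻¹ := inv_anti₀ hA0 hA4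
  linarith
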